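/- Let p ∈ ℕ, Σ̂ a p×p real symmetric positive semidefinite matrix with Σ̂ ≠ 0 or λ > 0, λ ≥ λ′ > 0, Σ̂_λ := Σ̂ + λ·I_p, β_0 ∈ ℝ^p, σ ≥ 0, n ∈ ℕ with n ≥ 1. Set β_λ := Σ̂_λ^{−1} Σ̂ β_0, γ := (Σ̂ + λ′·I_p)^{−1} Σ̂ β_0, and for a continuous function R : ℝ → ℝ define the prediction risk 𝓡(R) := ‖Σ̂_λ^{1/2}(R(Σ̂_λ)β_λ + (γ − β_λ))‖² + (σ²/n)·trace((I_p − R(Σ̂_λ))² Σ̂_λ^{−1} Σ̂). Then the oracle gradient-flow risk is bounded by the oracle ridge risk: inf over t ≥ 1/(2‖Σ̂_λ‖_{op}) of 𝓡(x ↦ exp(−t·x)) ≤ 1.2985² · inf over λ̃ ∈ [λ, λ + 2‖Σ̂_λ‖_{op}] of 𝓡(x ↦ (λ̃−λ)/((λ̃−λ) + x)). -/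

import Mathlib

open Matrix

/-- Squared Euclidean norm on `Fin p → ℝ`. -/
noncomputable def sqnorm {p : ℕ} (v : Fin p → ℝ) : ℝ := ∑ i, (v i) ^ 2

/-- The spectral (ℓ²-operator) norm of a real matrix. -/
noncomputable def opNorm {p : ℕ} (M : Matrix (Fin p) (Fin p) ℝ) : ℝ :=
  ‖Matrix.toEuclideanCLM (𝕜 := ℝ) M‖

open Topology Filter


lemma exp_taylor_ub (x S : ℝ) (hx : |x| ≤ 1)
    (h : ∑ i ∈ Finset.range 10, x ^ i / (Nat.factorial i) + |x| ^ 10 * (11 / (Nat.factorial 10 * 10)) ≤ S) :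
    Real.exp x ≤ S := by
  have h1 := Real.exp_bound hx (n := 10) (by norm_num)
  have h2 := (abs_sub_le_iff.1 h1).1
  push_cast at h2 h ⊢
  norm_num at h2 h ⊢
  linarith

lemma exp_neg_lb (m q : ℝ) (k : ℕ) (S : ℝ)
    (hS : Real.exp (m - k) ≤ S)
    (hq : 0 ≤ q)
    (h : q * (S * 2.7182818286 ^ k) ≤ 1) : q ≤ Real.exp (-m) := by
  have hek : Real.exp (k : ℝ) ≤ 2.7182818286 ^ k := by
    have h1 : Real.exp (k : ℝ) = Real.exp 1 ^ k := by
      rw [← Real.exp_nat_mul]; norm_num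
    rw [h1]
    exact pow_le_pow_left₀ (Real.exp_pos 1).le Real.exp_one_lt_d9.le k
  have hm : Real.exp m ≤ S * 2.7182818286 ^ k := by
    have h2 : Real.exp m = Real.exp (m - k) * Real.exp (k : ℝ) := by
      rw [← Real.exp_add]; ring_nf
    rw [h2]
    have hS0 : 0 < S := lt_of_lt_of_le (Real.exp_pos _) hS
    exact mul_le_mul hS hek (Real.exp_pos _).le hS0.le
  have h3 : q * Real.exp m ≤ 1 := le_trans (mul_le_mul_of_nonneg_left hm hq) h
  have h4 : 0 < Real.exp m := Real.exp_pos m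
  rw [Real.exp_neg]
  calc q = q * Real.exp m * (Real.exp m)⁻¹ := by field_simp
    _ ≤ 1 * (Real.exp m)⁻¹ := mul_le_mul_of_nonneg_right h3 (inv_nonneg.2 h4.le)
    _ = (Real.exp m)⁻¹ := one_mul _

lemma interval_step (C m q a b u : ℝ) (hq0 : 0 ≤ q) (hq : q ≤ Real.exp (-m))
    (hub : u ≤ b) (hau : a ≤ u) (ha0 : 0 ≤ a) (hab : a < b) (hbm : b ≤ 1 + m)
    (hQa : (1 - q * (1 + m - a)) * (1 + a) ≤ C * a)
    (hQb : (1 - q * (1 + m - b)) * (1 + b) ≤ C * b) :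
    (1 - Real.exp (-u)) * (1 + u) ≤ C * u := by
  have h1 : q * (1 + m - u) ≤ Real.exp (-u) := by
    have h2 : (m - u) + 1 ≤ Real.exp (m - u) := Real.add_one_le_exp _
    have h3 : Real.exp (-u) = Real.exp (-m) * Real.exp (m - u) := by
      rw [← Real.exp_add]; ring_nf
    have h4 : q * (1 + m - u) ≤ Real.exp (-m) * (1 + m - u) :=
      mul_le_mul_of_nonneg_right hq (by linarith)
    have h5 : Real.exp (-m) * (1 + m - u) ≤ Real.exp (-m) * Real.exp (m - u) :=
      mul_le_mul_of_nonneg_left (by linarith) (Real.exp_pos _).le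
    rw [h3]; linarith
  have hu1 : (0:ℝ) ≤ 1 + u := by linarith
  have key : (1 - q * (1 + m - u)) * (1 + u) ≤ C * u := by
    have t1 : 0 ≤ (b - u) * (C * a - (1 - q * (1 + m - a)) * (1 + a)) :=
      mul_nonneg (sub_nonneg.2 hub) (sub_nonneg.2 hQa)
    have t2 : 0 ≤ (u - a) * (C * b - (1 - q * (1 + m - b)) * (1 + b)) :=
      mul_nonneg (sub_nonneg.2 hau) (sub_nonneg.2 hQb)
    have t3 : 0 ≤ q * (u - a) * (b - u) * (u - a) :=
      mul_nonneg (mul_nonneg (mul_nonneg hq0 (sub_nonneg.2 hau)) (sub_nonneg.2 hub)) (sub_nonneg.2 hau)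
    have t4 : 0 ≤ q * (u - a) * (b - u) * (b - u) :=
      mul_nonneg (mul_nonneg (mul_nonneg hq0 (sub_nonneg.2 hau)) (sub_nonneg.2 hub)) (sub_nonneg.2 hub)
    nlinarith [t1, t2, t3, t4, hab]
  nlinarith [mul_nonneg (sub_nonneg.2 h1) hu1, key]

lemma key_scalar (u : ℝ) (hu : 0 ≤ u) : (1 - Real.exp (-u)) * (1 + u) ≤ (1.2985) * u := by
  rcases le_or_gt u (62/100 : ℝ) with h62 | h62
  · have h4 : (1 - u/4)^4 ≤ Real.exp (-u) := by
      have h1 : 1 - u/4 ≤ Real.exp (-(u/4)) := by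
        have := Real.add_one_le_exp (-(u/4)); linarith
      calc (1 - u/4)^4 ≤ Real.exp (-(u/4))^4 := by
            exact pow_le_pow_left₀ (by linarith) h1 4
        _ = Real.exp (-u) := by rw [← Real.exp_nat_mul]; congr 1; push_cast; ring
    nlinarith [mul_nonneg (sub_nonneg.2 h4) (by linarith : (0:ℝ) ≤ 1 + u), mul_nonneg hu (sub_nonneg.2 h62), mul_nonneg (mul_nonneg hu hu) (sub_nonneg.2 h62), mul_nonneg (mul_nonneg (mul_nonneg hu hu) hu) (sub_nonneg.2 h62), sq_nonneg u, sq_nonneg (u*u)]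
  rcases le_or_gt (337/100 : ℝ) u with h337 | h337
  · have he : 0 < Real.exp (-u) := Real.exp_pos _
    nlinarith [mul_pos he (show (0:ℝ) < 1 + u by linarith)]
  rcases le_or_gt u (11227/10000 : ℝ) with hb0 | hb0
  · have hq : (418386341/1000000000 : ℝ) ≤ Real.exp (-(17427/20000 : ℝ)) := by
      apply exp_neg_lb (17427/20000 : ℝ) (418386341/1000000000 : ℝ) 1 (326731498374454935698257239135865860030192682959139/371589120000000000000000000000000000000000000000000 : ℝ)
      · refine exp_taylor_ub _ _ ?_ ?_
        · rw [show (17427/20000 : ℝ) - ((1 : ℕ) : ℝ) = (-(2573/20000) : ℝ) by norm_num, abs_of_nonpos (by norm_num)]; norm_num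
        · rw [show (17427/20000 : ℝ) - ((1 : ℕ) : ℝ) = (-(2573/20000) : ℝ) by norm_num, abs_of_nonpos (by norm_num)]
          norm_num [Finset.sum_range_succ, Nat.factorial]
      · norm_num
      · norm_num
    exact interval_step 1.2985 (17427/20000 : ℝ) (418386341/1000000000 : ℝ) (31/50 : ℝ) (11227/10000 : ℝ) u (by norm_num) hq hb0 (by linarith) (by norm_num) (by norm_num) (by norm_num) (by norm_num) (by norm_num)
  rcases le_or_gt u (14383/10000 : ℝ) with hb1 | hb1
  · have hq : (277898311/1000000000 : ℝ) ≤ Real.exp (-(2561/2000 : ℝ)) := by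
      apply exp_neg_lb (2561/2000 : ℝ) (277898311/1000000000 : ℝ) 1 (607292017779489879804320905364432363131/458752000000000000000000000000000000000 : ℝ)
      · refine exp_taylor_ub _ _ ?_ ?_
        · rw [show (2561/2000 : ℝ) - ((1 : ℕ) : ℝ) = (561/2000 : ℝ) by norm_num, abs_of_nonneg (by norm_num)]; norm_num
        · rw [show (2561/2000 : ℝ) - ((1 : ℕ) : ℝ) = (561/2000 : ℝ) by norm_num, abs_of_nonneg (by norm_num)]
          norm_num [Finset.sum_range_succ, Nat.factorial]
      · norm_num
      · norm_num
    exact interval_step 1.2985 (2561/2000 : ℝ) (277898311/1000000000 : ℝ) (11227/10000 : ℝ) (14383/10000 : ℝ) u (by norm_num) hq hb1 (by linarith) (by norm_num) (by norm_num) (by norm_num) (by norm_num) (by norm_num)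
  rcases le_or_gt u (8077/5000 : ℝ) with hb2 | hb2
  · have hq : (8688753/40000000 : ℝ) ≤ Real.exp (-(30537/20000 : ℝ)) := by
      apply exp_neg_lb (30537/20000 : ℝ) (8688753/40000000 : ℝ) 2 (11024458340673983781625143481121302734010698518159/17694720000000000000000000000000000000000000000000 : ℝ)
      · refine exp_taylor_ub _ _ ?_ ?_
        · rw [show (30537/20000 : ℝ) - ((2 : ℕ) : ℝ) = (-(9463/20000) : ℝ) by norm_num, abs_of_nonpos (by norm_num)]; norm_num
        · rw [show (30537/20000 : ℝ) - ((2 : ℕ) : ℝ) = (-(9463/20000) : ℝ) by norm_num, abs_of_nonpos (by norm_num)]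
          norm_num [Finset.sum_range_succ, Nat.factorial]
      · norm_num
      · norm_num
    exact interval_step 1.2985 (30537/20000 : ℝ) (8688753/40000000 : ℝ) (14383/10000 : ℝ) (8077/5000 : ℝ) u (by norm_num) hq hb2 (by linarith) (by norm_num) (by norm_num) (by norm_num) (by norm_num) (by norm_num)
  rcases le_or_gt u (8553/5000 : ℝ) with hb3 | hb3
  · have hq : (47392353/250000000 : ℝ) ≤ Real.exp (-(1663/1000 : ℝ)) := by
      apply exp_neg_lb (1663/1000 : ℝ) (47392353/250000000 : ℝ) 2 (3700903426059204200394172347336712477/5184000000000000000000000000000000000 : ℝ)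
      · refine exp_taylor_ub _ _ ?_ ?_
        · rw [show (1663/1000 : ℝ) - ((2 : ℕ) : ℝ) = (-(337/1000) : ℝ) by norm_num, abs_of_nonpos (by norm_num)]; norm_num
        · rw [show (1663/1000 : ℝ) - ((2 : ℕ) : ℝ) = (-(337/1000) : ℝ) by norm_num, abs_of_nonpos (by norm_num)]
          norm_num [Finset.sum_range_succ, Nat.factorial]
      · norm_num
      · norm_num
    exact interval_step 1.2985 (1663/1000 : ℝ) (47392353/250000000 : ℝ) (8077/5000 : ℝ) (8553/5000 : ℝ) u (by norm_num) hq hb3 (by linarith) (by norm_num) (by norm_num) (by norm_num) (by norm_num) (by norm_num)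
  rcases le_or_gt u (8827/5000 : ℝ) with hb4 | hb4
  · have hq : (175871787/1000000000 : ℝ) ≤ Real.exp (-(869/500 : ℝ)) := by
      apply exp_neg_lb (869/500 : ℝ) (175871787/1000000000 : ℝ) 2 (27269546902639052919463561123569811/35437500000000000000000000000000000 : ℝ)
      · refine exp_taylor_ub _ _ ?_ ?_
        · rw [show (869/500 : ℝ) - ((2 : ℕ) : ℝ) = (-(131/500) : ℝ) by norm_num, abs_of_nonpos (by norm_num)]; norm_num
        · rw [show (869/500 : ℝ) - ((2 : ℕ) : ℝ) = (-(131/500) : ℝ) by norm_num, abs_of_nonpos (by norm_num)]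
          norm_num [Finset.sum_range_succ, Nat.factorial]
      · norm_num
      · norm_num
    exact interval_step 1.2985 (869/500 : ℝ) (175871787/1000000000 : ℝ) (8553/5000 : ℝ) (8827/5000 : ℝ) u (by norm_num) hq hb4 (by linarith) (by norm_num) (by norm_num) (by norm_num) (by norm_num) (by norm_num)
  rcases le_or_gt u (18213/10000 : ℝ) with hb5 | hb5
  · have hq : (166401783/1000000000 : ℝ) ≤ Real.exp (-(35867/20000 : ℝ)) := by
      apply exp_neg_lb (35867/20000 : ℝ) (166401783/1000000000 : ℝ) 2 (43173573289662965117124398555697730833267757380277/53084160000000000000000000000000000000000000000000 : ℝ)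
      · refine exp_taylor_ub _ _ ?_ ?_
        · rw [show (35867/20000 : ℝ) - ((2 : ℕ) : ℝ) = (-(4133/20000) : ℝ) by norm_num, abs_of_nonpos (by norm_num)]; norm_num
        · rw [show (35867/20000 : ℝ) - ((2 : ℕ) : ℝ) = (-(4133/20000) : ℝ) by norm_num, abs_of_nonpos (by norm_num)]
          norm_num [Finset.sum_range_succ, Nat.factorial]
      · norm_num
      · norm_num
    exact interval_step 1.2985 (35867/20000 : ℝ) (166401783/1000000000 : ℝ) (8827/5000 : ℝ) (18213/10000 : ℝ) u (by norm_num) hq hb5 (by linarith) (by norm_num) (by norm_num) (by norm_num) (by norm_num) (by norm_num)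
  rcases le_or_gt u (1879/1000 : ℝ) with hb6 | hb6
  · have hq : (157213577/1000000000 : ℝ) ≤ Real.exp (-(37003/20000 : ℝ)) := by
      apply exp_neg_lb (37003/20000 : ℝ) (157213577/1000000000 : ℝ) 2 (3949107377690898935965245099913490468867260818019/4587520000000000000000000000000000000000000000000 : ℝ)
      · refine exp_taylor_ub _ _ ?_ ?_
        · rw [show (37003/20000 : ℝ) - ((2 : ℕ) : ℝ) = (-(2997/20000) : ℝ) by norm_num, abs_of_nonpos (by norm_num)]; norm_num
        · rw [show (37003/20000 : ℝ) - ((2 : ℕ) : ℝ) = (-(2997/20000) : ℝ) by norm_num, abs_of_nonpos (by norm_num)]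
          norm_num [Finset.sum_range_succ, Nat.factorial]
      · norm_num
      · norm_num
    exact interval_step 1.2985 (37003/20000 : ℝ) (157213577/1000000000 : ℝ) (18213/10000 : ℝ) (1879/1000 : ℝ) u (by norm_num) hq hb6 (by linarith) (by norm_num) (by norm_num) (by norm_num) (by norm_num) (by norm_num)
  rcases le_or_gt u (19877/10000 : ℝ) with hb7 | hb7
  · have hq : (3616569/25000000 : ℝ) ≤ Real.exp (-(38667/20000 : ℝ)) := by
      apply exp_neg_lb (38667/20000 : ℝ) (3616569/25000000 : ℝ) 2 (5517936684237917133591225743243853855348612694253/5898240000000000000000000000000000000000000000000 : ℝ)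
      · refine exp_taylor_ub _ _ ?_ ?_
        · rw [show (38667/20000 : ℝ) - ((2 : ℕ) : ℝ) = (-(1333/20000) : ℝ) by norm_num, abs_of_nonpos (by norm_num)]; norm_num
        · rw [show (38667/20000 : ℝ) - ((2 : ℕ) : ℝ) = (-(1333/20000) : ℝ) by norm_num, abs_of_nonpos (by norm_num)]
          norm_num [Finset.sum_range_succ, Nat.factorial]
      · norm_num
      · norm_num
    exact interval_step 1.2985 (38667/20000 : ℝ) (3616569/25000000 : ℝ) (1879/1000 : ℝ) (19877/10000 : ℝ) u (by norm_num) hq hb7 (by linarith) (by norm_num) (by norm_num) (by norm_num) (by norm_num) (by norm_num)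
  rcases le_or_gt u (11127/5000 : ℝ) with hb8 | hb8
  · have hq : (60828477/500000000 : ℝ) ≤ Real.exp (-(42131/20000 : ℝ)) := by
      apply exp_neg_lb (42131/20000 : ℝ) (60828477/500000000 : ℝ) 2 (413368202688809438953931617276129520051395964739811/371589120000000000000000000000000000000000000000000 : ℝ)
      · refine exp_taylor_ub _ _ ?_ ?_
        · rw [show (42131/20000 : ℝ) - ((2 : ℕ) : ℝ) = (2131/20000 : ℝ) by norm_num, abs_of_nonneg (by norm_num)]; norm_num
        · rw [show (42131/20000 : ℝ) - ((2 : ℕ) : ℝ) = (2131/20000 : ℝ) by norm_num, abs_of_nonneg (by norm_num)]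
          norm_num [Finset.sum_range_succ, Nat.factorial]
      · norm_num
      · norm_num
    exact interval_step 1.2985 (42131/20000 : ℝ) (60828477/500000000 : ℝ) (19877/10000 : ℝ) (11127/5000 : ℝ) u (by norm_num) hq hb8 (by linarith) (by norm_num) (by norm_num) (by norm_num) (by norm_num) (by norm_num)
  rcases le_or_gt u (2821/1000 : ℝ) with hb9 | hb9
  · have hq : (40101271/500000000 : ℝ) ≤ Real.exp (-(1577/625 : ℝ)) := by
      apply exp_neg_lb (1577/625 : ℝ) (40101271/500000000 : ℝ) 3 (57164129758770479894226095228771/92086338554508984088897705078125 : ℝ)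
      · refine exp_taylor_ub _ _ ?_ ?_
        · rw [show (1577/625 : ℝ) - ((3 : ℕ) : ℝ) = (-(298/625) : ℝ) by norm_num, abs_of_nonpos (by norm_num)]; norm_num
        · rw [show (1577/625 : ℝ) - ((3 : ℕ) : ℝ) = (-(298/625) : ℝ) by norm_num, abs_of_nonpos (by norm_num)]
          norm_num [Finset.sum_range_succ, Nat.factorial]
      · norm_num
      · norm_num
    exact interval_step 1.2985 (1577/625 : ℝ) (40101271/500000000 : ℝ) (11127/5000 : ℝ) (2821/1000 : ℝ) u (by norm_num) hq hb9 (by linarith) (by norm_num) (by norm_num) (by norm_num) (by norm_num) (by norm_num)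
  rcases le_or_gt u (337/100 : ℝ) with hb10 | hb10
  · have hq : (362019/8000000 : ℝ) ≤ Real.exp (-(6191/2000 : ℝ)) := by
      apply exp_neg_lb (6191/2000 : ℝ) (362019/8000000 : ℝ) 3 (13627520933194221055128593158560867290137/12386304000000000000000000000000000000000 : ℝ)
      · refine exp_taylor_ub _ _ ?_ ?_
        · rw [show (6191/2000 : ℝ) - ((3 : ℕ) : ℝ) = (191/2000 : ℝ) by norm_num, abs_of_nonneg (by norm_num)]; norm_num
        · rw [show (6191/2000 : ℝ) - ((3 : ℕ) : ℝ) = (191/2000 : ℝ) by norm_num, abs_of_nonneg (by norm_num)]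
          norm_num [Finset.sum_range_succ, Nat.factorial]
      · norm_num
      · norm_num
    exact interval_step 1.2985 (6191/2000 : ℝ) (362019/8000000 : ℝ) (2821/1000 : ℝ) (337/100 : ℝ) u (by norm_num) hq hb10 (by linarith) (by norm_num) (by norm_num) (by norm_num) (by norm_num) (by norm_num)
  linarith

section md
variable {p : ℕ}

/-- auxiliary: conjugation of a diagonal function matrix -/
noncomputable def md (U : Matrix (Fin p) (Fin p) ℝ) (μ : Fin p → ℝ) (g : ℝ → ℝ) :
    Matrix (Fin p) (Fin p) ℝ :=
  U * Matrix.diagonal (fun i => g (μ i)) * star U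

variable {U : Matrix (Fin p) (Fin p) ℝ} {μ : Fin p → ℝ} (hU : star U * U = 1)

lemma md_congr {g h : ℝ → ℝ} (hgh : ∀ i, g (μ i) = h (μ i)) : md U μ g = md U μ h := by
  unfold md; congr 2; exact Matrix.diagonal_eq_diagonal_iff.2 fun i => hgh i

include hU in
lemma md_mul (g h : ℝ → ℝ) :
    md U μ g * md U μ h = md U μ (fun x => g x * h x) := by
  unfold md
  have key : (U * Matrix.diagonal (fun i => g (μ i)) * star U) *
      (U * Matrix.diagonal (fun i => h (μ i)) * star U)
      = U * (Matrix.diagonal (fun i => g (μ i)) * (star U * U) *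
          Matrix.diagonal (fun i => h (μ i))) * star U := by
    noncomm_ring
  rw [key, hU, Matrix.mul_one, Matrix.diagonal_mul_diagonal]

include hU in
lemma md_one : md U μ (fun _ => 1) = 1 := by
  unfold md
  rw [Matrix.diagonal_one, Matrix.mul_one, mul_eq_one_comm.1 hU]

lemma md_sub (g h : ℝ → ℝ) : md U μ g - md U μ h = md U μ (fun x => g x - h x) := by
  unfold md
  rw [← Matrix.sub_mul, ← Matrix.mul_sub, Matrix.diagonal_sub]

lemma md_add (g h : ℝ → ℝ) : md U μ g + md U μ h = md U μ (fun x => g x + h x) := by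
  unfold md
  rw [← Matrix.add_mul, ← Matrix.mul_add, Matrix.diagonal_add]

lemma md_smul (c : ℝ) (g : ℝ → ℝ) : c • md U μ g = md U μ (fun x => c * g x) := by
  unfold md
  rw [← Matrix.smul_mul, ← Matrix.mul_smul, ← Matrix.diagonal_smul]
  congr 2

lemma md_mulVec (g : ℝ → ℝ) (v : Fin p → ℝ) :
    md U μ g *ᵥ v = U *ᵥ (fun i => g (μ i) * ((star U *ᵥ v) i)) := by
  unfold md
  rw [← Matrix.mulVec_mulVec, ← Matrix.mulVec_mulVec]
  have h2 : ((Matrix.diagonal fun i => g (μ i)) *ᵥ (star U *ᵥ v))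
      = fun i => g (μ i) * ((star U *ᵥ v) i) :=
    funext fun i => Matrix.mulVec_diagonal _ _ _
  rw [h2]

include hU in
lemma md_trace (g : ℝ → ℝ) : (md U μ g).trace = ∑ i, g (μ i) := by
  unfold md
  rw [Matrix.trace_mul_comm, ← Matrix.mul_assoc, hU, Matrix.one_mul, Matrix.trace_diagonal]

include hU in
lemma sqnorm_mulVec_U (y : Fin p → ℝ) : sqnorm (U *ᵥ y) = sqnorm y := by
  have h1 : ∀ v : Fin p → ℝ, sqnorm v = v ⬝ᵥ v := by
    intro v; simp [sqnorm, dotProduct, sq]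
  rw [h1, h1]
  have hT : Uᵀ = star U := by
    ext i j; simp [Matrix.transpose_apply, Matrix.star_apply]
  rw [dotProduct_mulVec, ← Matrix.mulVec_transpose, hT, Matrix.mulVec_mulVec, hU,
    Matrix.one_mulVec]

end md

/-- bounds comparing the gradient flow residual filter at `t = kap⁻¹` with the ridge
residual filter `kap/(kap+x)`. -/
lemma exp_ridge_bounds (kap x : ℝ) (hk : 0 < kap) (hx : 0 < x) :
    Real.exp (-(kap⁻¹ * x)) ≤ kap / (kap + x) ∧
    1 - Real.exp (-(kap⁻¹ * x)) ≤ 1.2985 * (1 - kap / (kap + x)) := by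
  have hkx : 0 < kap + x := by linarith
  have hrr : 1 - kap / (kap + x) = x / (kap + x) := by field_simp; ring
  have hu0 : 0 ≤ kap⁻¹ * x := by positivity
  have h4 : kap⁻¹ * x + 1 = (kap + x) / kap := by
    field_simp
    ring
  constructor
  · have h1 := Real.add_one_le_exp (kap⁻¹ * x)
    rw [Real.exp_neg]
    have h2 : (Real.exp (kap⁻¹ * x))⁻¹ ≤ (kap⁻¹ * x + 1)⁻¹ :=
      inv_anti₀ (by positivity) h1
    calc (Real.exp (kap⁻¹ * x))⁻¹ ≤ (kap⁻¹ * x + 1)⁻¹ := h2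
      _ = kap / (kap + x) := by rw [h4, inv_div]
  · have h1 := key_scalar (kap⁻¹ * x) hu0
    have h2 : 1 - Real.exp (-(kap⁻¹ * x)) ≤ 1.2985 * (kap⁻¹ * x) / (1 + kap⁻¹ * x) := by
      rw [le_div_iff₀ (by linarith)]
      nlinarith [h1]
    calc 1 - Real.exp (-(kap⁻¹ * x)) ≤ 1.2985 * (kap⁻¹ * x) / (1 + kap⁻¹ * x) := h2
      _ = 1.2985 * (1 - kap / (kap + x)) := by
          rw [hrr, show 1 + kap⁻¹ * x = (kap + x) / kap from by field_simp,
            div_div_eq_mul_div,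
            show 1.2985 * (kap⁻¹ * x) * kap = 1.2985 * x * (kap⁻¹ * kap) from by ring,
            inv_mul_cancel₀ (ne_of_gt hk), mul_one, mul_div_assoc]

/-- abstract per-eigenvalue comparison of risks. -/
lemma term_compare_abs (C x lam s f1v dv bb Re Rr : ℝ)
    (hC : 1 ≤ C) (hx : 0 < x) (hxl : lam ≤ x) (hs : 0 ≤ s)
    (hf1 : 0 ≤ f1v) (hd : 0 ≤ dv) (hRe0 : 0 ≤ Re) (hRe1 : Re ≤ 1)
    (hRr0 : 0 ≤ Rr) (he1 : Re ≤ Rr) (he2 : 1 - Re ≤ C * (1 - Rr)) :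
    x * ((Re * f1v + dv) * bb) ^ 2 + s * ((1 - Re) ^ 2 * x⁻¹ * (x - lam))
    ≤ C ^ 2 * (x * ((Rr * f1v + dv) * bb) ^ 2 + s * ((1 - Rr) ^ 2 * x⁻¹ * (x - lam))) := by
  have h1 : Re * f1v + dv ≤ C * (Rr * f1v + dv) := by
    have a1 : Re * f1v ≤ Rr * f1v := mul_le_mul_of_nonneg_right he1 hf1
    have a2 : Rr * f1v ≤ C * (Rr * f1v) := le_mul_of_one_le_left (mul_nonneg hRr0 hf1) hC
    have a3 : dv ≤ C * dv := le_mul_of_one_le_left hd hC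
    nlinarith [a1, a2, a3]
  have h0 : 0 ≤ Re * f1v + dv := by positivity
  have hsq : (Re * f1v + dv) ^ 2 ≤ C ^ 2 * (Rr * f1v + dv) ^ 2 := by
    have h4 := mul_self_le_mul_self h0 h1
    calc (Re * f1v + dv) ^ 2 = (Re * f1v + dv) * (Re * f1v + dv) := by ring
      _ ≤ (C * (Rr * f1v + dv)) * (C * (Rr * f1v + dv)) := h4
      _ = C ^ 2 * (Rr * f1v + dv) ^ 2 := by ring
  have hvar : (1 - Re) ^ 2 ≤ C ^ 2 * (1 - Rr) ^ 2 := by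
    have h5 : (0:ℝ) ≤ 1 - Re := by linarith
    have h6 := mul_self_le_mul_self h5 he2
    calc (1 - Re) ^ 2 = (1 - Re) * (1 - Re) := by ring
      _ ≤ (C * (1 - Rr)) * (C * (1 - Rr)) := h6
      _ = C ^ 2 * (1 - Rr) ^ 2 := by ring
  have hc1 : 0 ≤ x * bb ^ 2 := by positivity
  have hc2 : 0 ≤ s * x⁻¹ * (x - lam) :=
    mul_nonneg (mul_nonneg hs (inv_nonneg.2 hx.le)) (by linarith)
  have t1 : x * ((Re * f1v + dv) * bb) ^ 2 ≤ C ^ 2 * (x * ((Rr * f1v + dv) * bb) ^ 2) := by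
    calc x * ((Re * f1v + dv) * bb) ^ 2 = (Re * f1v + dv) ^ 2 * (x * bb ^ 2) := by ring
      _ ≤ (C ^ 2 * (Rr * f1v + dv) ^ 2) * (x * bb ^ 2) := mul_le_mul_of_nonneg_right hsq hc1
      _ = C ^ 2 * (x * ((Rr * f1v + dv) * bb) ^ 2) := by ring
  have t2 : s * ((1 - Re) ^ 2 * x⁻¹ * (x - lam))
      ≤ C ^ 2 * (s * ((1 - Rr) ^ 2 * x⁻¹ * (x - lam))) := by
    calc s * ((1 - Re) ^ 2 * x⁻¹ * (x - lam)) = (1 - Re) ^ 2 * (s * x⁻¹ * (x - lam)) := by ring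
      _ ≤ (C ^ 2 * (1 - Rr) ^ 2) * (s * x⁻¹ * (x - lam)) := mul_le_mul_of_nonneg_right hvar hc2
      _ = C ^ 2 * (s * ((1 - Rr) ^ 2 * x⁻¹ * (x - lam))) := by ring
  calc x * ((Re * f1v + dv) * bb) ^ 2 + s * ((1 - Re) ^ 2 * x⁻¹ * (x - lam))
      ≤ C ^ 2 * (x * ((Rr * f1v + dv) * bb) ^ 2) + C ^ 2 * (s * ((1 - Rr) ^ 2 * x⁻¹ * (x - lam))) :=
        add_le_add t1 t2
    _ = C ^ 2 * (x * ((Rr * f1v + dv) * bb) ^ 2 + s * ((1 - Rr) ^ 2 * x⁻¹ * (x - lam))) := by ring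


/-- the oracle gradient-flow prediction risk (over times
`t ≥ 1/(2‖Σ̂_λ‖)`) is bounded by `1.2985²` times the oracle ridge prediction risk (over
penalties `λ̃ ∈ [λ, λ + 2‖Σ̂_λ‖]`), for the target `γ = β_{λ′}` with `0 < λ′ ≤ λ`. -/
theorem oracle_gf_le_oracle_ridge
    (p : ℕ) (lam lam' : ℝ) (hlam' : 0 < lam') (hll : lam' ≤ lam)
    (Sig : Matrix (Fin p) (Fin p) ℝ) (hSig : Sig.PosSemidef)
    (hne : Sig ≠ 0 ∨ 0 < lam)
    (Sigl : Matrix (Fin p) (Fin p) ℝ) (hSigl_def : Sigl = Sig + lam • 1)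
    (hSigl : Sigl.PosSemidef)
    (beta0 : Fin p → ℝ) (sigma : ℝ) (hsigma : 0 ≤ sigma) (n : ℕ) (hn : 1 ≤ n)
    (betal gam : Fin p → ℝ)
    (hbetal : betal = Sigl⁻¹ *ᵥ (Sig *ᵥ beta0))
    (hgam : gam = (Sig + lam' • 1)⁻¹ *ᵥ (Sig *ᵥ beta0))
    (risk : (ℝ → ℝ) → ℝ)
    (hrisk : ∀ R : ℝ → ℝ,
      risk R = sqnorm (hSigl.isHermitian.cfc Real.sqrt *ᵥ (hSigl.isHermitian.cfc R *ᵥ betal + (gam - betal)))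
        + sigma ^ 2 / n * ((1 - hSigl.isHermitian.cfc R) ^ 2 * Sigl⁻¹ * Sig).trace) :
    sInf {r : ℝ | ∃ t : ℝ, 1 / (2 * opNorm Sigl) ≤ t ∧
        r = risk (fun x => Real.exp (-(t * x)))} ≤
      1.2985 ^ 2 * sInf {r : ℝ | ∃ l : ℝ, lam ≤ l ∧ l ≤ lam + 2 * opNorm Sigl ∧
        r = risk (fun x => (l - lam) / ((l - lam) + x))} := by
  classical
  have hlam0 : 0 < lam := lt_of_lt_of_le hlam' hll
  set U : Matrix (Fin p) (Fin p) ℝ :=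
    (Matrix.IsHermitian.eigenvectorUnitary hSigl.isHermitian : Matrix (Fin p) (Fin p) ℝ)
    with hUdef
  set μ : Fin p → ℝ := hSigl.isHermitian.eigenvalues with hμdef
  have hU : star U * U = 1 := by
    rw [hUdef]
    exact (Unitary.mem_iff.1 (Matrix.IsHermitian.eigenvectorUnitary hSigl.isHermitian).2).1
  have hspec : Sigl = md U μ id := by
    conv_lhs => rw [hSigl.isHermitian.spectral_theorem]
    unfold md
    congr 2 <;> funext i <;> simp [RCLike.ofReal_real_eq_id]
  have hcfc : ∀ R : ℝ → ℝ, hSigl.isHermitian.cfc R = md U μ R := by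
    intro R
    rw [Matrix.IsHermitian.cfc]
    unfold md
    congr 2 <;> funext i <;> simp [RCLike.ofReal_real_eq_id]
  have hsqrt : hSigl.isHermitian.cfc Real.sqrt = md U μ Real.sqrt := by
    exact hcfc Real.sqrt
  have hSigmd : Sig = md U μ (fun x => x - lam) := by
    have h1 : Sig = Sigl - lam • (1 : Matrix (Fin p) (Fin p) ℝ) := by
      rw [hSigl_def]; abel
    rw [h1, hspec, ← md_one hU, md_smul, md_sub]
    exact md_congr fun i => by simp
  have hμlam : ∀ i, lam ≤ μ i := by
    intro i
    have hcol : star U *ᵥ (fun j => U j i) = fun k => (1 : Matrix (Fin p) (Fin p) ℝ) k i := by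
      funext k
      rw [← hU, Matrix.mul_apply]
      rfl
    have hSv : Sig *ᵥ (fun j => U j i) = (μ i - lam) • (fun j => U j i) := by
      rw [hSigmd, md_mulVec, hcol]
      have hinner : (fun k => (fun x => x - lam) (μ k) *
          ((fun k => (1 : Matrix (Fin p) (Fin p) ℝ) k i) k)) = Pi.single i (μ i - lam) := by
        funext k
        rcases eq_or_ne k i with h | h
        · subst h
          simp [Matrix.one_apply_eq, Pi.single_eq_same]
        · simp [Pi.single_eq_of_ne h, h]
      rw [hinner, Matrix.mulVec_single]
      funext j
      simp [mul_comm]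
    have hstar : (star fun j => U j i) = fun j => U j i := by funext j; simp
    have hps : (0:ℝ) ≤ (fun j => U j i) ⬝ᵥ ((μ i - lam) • fun j => U j i) := by
      have h := hSig.dotProduct_mulVec_nonneg (fun j => U j i)
      rwa [hSv, hstar] at h
    have hvv : (fun j => U j i) ⬝ᵥ (fun j => U j i) = 1 := by
      have h2 : (fun j => U j i) ⬝ᵥ (fun j => U j i) = (star U * U) i i := by
        simp [Matrix.mul_apply, dotProduct, Matrix.star_apply, mul_comm]
      rw [h2, hU, Matrix.one_apply_eq]
    have h3 : (fun j => U j i) ⬝ᵥ ((μ i - lam) • fun j => U j i)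
        = (μ i - lam) * ((fun j => U j i) ⬝ᵥ (fun j => U j i)) := by
      simp [dotProduct, Finset.mul_sum, mul_comm, mul_left_comm]
    rw [h3, hvv, mul_one] at hps
    linarith
  have hμ0 : ∀ i, 0 < μ i := fun i => lt_of_lt_of_le hlam0 (hμlam i)
  have hSiglInv : Sigl⁻¹ = md U μ (fun x => x⁻¹) := by
    apply Matrix.inv_eq_right_inv
    rw [hspec, md_mul hU]
    rw [md_congr (g := fun x => id x * x⁻¹) (h := fun _ => 1)
      (fun i => by field_simp [ne_of_gt (hμ0 i)]; rfl), md_one hU]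
  have hPinv : (Sig + lam' • 1)⁻¹ = md U μ (fun x => (x - lam + lam')⁻¹) := by
    have hP : Sig + lam' • 1 = md U μ (fun x => x - lam + lam') := by
      rw [hSigmd, ← md_one hU, md_smul, md_add]
      exact md_congr fun i => by ring
    apply Matrix.inv_eq_right_inv
    rw [hP, md_mul hU]
    have hpos : ∀ i, μ i - lam + lam' ≠ 0 := fun i =>
      ne_of_gt (by linarith [hμlam i] : (0:ℝ) < μ i - lam + lam')
    rw [md_congr (g := fun x => (x - lam + lam') * (x - lam + lam')⁻¹) (h := fun _ => 1)
      (fun i => by field_simp [hpos i]), md_one hU]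
  have hbetal' : betal = md U μ (fun x => (x - lam) * x⁻¹) *ᵥ beta0 := by
    rw [hbetal, Matrix.mulVec_mulVec, hSiglInv, hSigmd, md_mul hU,
      md_congr (g := fun x => x⁻¹ * (x - lam)) (h := fun x => (x - lam) * x⁻¹)
        (fun i => by ring)]
  have hgam' : gam = md U μ (fun x => (x - lam) * (x - lam + lam')⁻¹) *ᵥ beta0 := by
    rw [hgam, Matrix.mulVec_mulVec, hPinv, hSigmd, md_mul hU,
      md_congr (g := fun x => (x - lam + lam')⁻¹ * (x - lam))
        (h := fun x => (x - lam) * (x - lam + lam')⁻¹) (fun i => by ring)]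
  have riskf : ∀ R : ℝ → ℝ, risk R =
      ∑ i, (μ i * ((R (μ i) * ((μ i - lam) * (μ i)⁻¹)
          + ((μ i - lam) * (μ i - lam + lam')⁻¹ - (μ i - lam) * (μ i)⁻¹))
            * ((star U *ᵥ beta0) i)) ^ 2
        + sigma ^ 2 / n * ((1 - R (μ i)) ^ 2 * (μ i)⁻¹ * (μ i - lam))) := by
    intro R
    rw [hrisk]
    have hz : hSigl.isHermitian.cfc R *ᵥ betal + (gam - betal)
        = md U μ (fun x => R x * ((x - lam) * x⁻¹)
            + ((x - lam) * (x - lam + lam')⁻¹ - (x - lam) * x⁻¹)) *ᵥ beta0 := by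
      rw [hcfc R, hbetal', hgam', Matrix.mulVec_mulVec, md_mul hU,
        ← Matrix.sub_mulVec, md_sub, ← Matrix.add_mulVec, md_add]
    have ht1 : sqnorm (hSigl.isHermitian.cfc Real.sqrt *ᵥ (hSigl.isHermitian.cfc R *ᵥ betal + (gam - betal)))
        = ∑ i, μ i * ((R (μ i) * ((μ i - lam) * (μ i)⁻¹)
            + ((μ i - lam) * (μ i - lam + lam')⁻¹ - (μ i - lam) * (μ i)⁻¹))
              * ((star U *ᵥ beta0) i)) ^ 2 := by
      rw [hz, hsqrt, Matrix.mulVec_mulVec, md_mul hU, md_mulVec, sqnorm_mulVec_U hU]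
      unfold sqnorm
      refine Finset.sum_congr rfl fun i _ => ?_
      show (Real.sqrt (μ i) * (R (μ i) * ((μ i - lam) * (μ i)⁻¹)
          + ((μ i - lam) * (μ i - lam + lam')⁻¹ - (μ i - lam) * (μ i)⁻¹))
            * ((star U *ᵥ beta0) i)) ^ 2 = _
      rw [mul_assoc, mul_pow, Real.sq_sqrt (hμ0 i).le]
    have ht2 : ((1 - hSigl.isHermitian.cfc R) ^ 2 * Sigl⁻¹ * Sig).trace
        = ∑ i, (1 - R (μ i)) ^ 2 * (μ i)⁻¹ * (μ i - lam) := by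
      rw [hcfc R, show (1 : Matrix (Fin p) (Fin p) ℝ) = md U μ (fun _ => 1) from
        (md_one hU).symm, md_sub, pow_two, md_mul hU, hSiglInv, hSigmd, md_mul hU,
        md_mul hU, md_trace hU]
      refine Finset.sum_congr rfl fun i _ => ?_
      ring
    rw [ht1, ht2, Finset.mul_sum, ← Finset.sum_add_distrib]
  have risk_nonneg : ∀ R : ℝ → ℝ, 0 ≤ risk R := by
    intro R
    rw [riskf R]
    refine Finset.sum_nonneg fun i _ => ?_
    have h1 := hμ0 i
    have h2 := hμlam i
    have hs0 : (0:ℝ) ≤ sigma ^ 2 / n := by positivity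
    refine add_nonneg (mul_nonneg h1.le (sq_nonneg _)) (mul_nonneg hs0 ?_)
    exact mul_nonneg (mul_nonneg (sq_nonneg _) (by positivity)) (by linarith)
  have hLbdd : BddBelow {r : ℝ | ∃ t : ℝ, 1 / (2 * opNorm Sigl) ≤ t ∧
      r = risk (fun x => Real.exp (-(t * x)))} := by
    refine ⟨0, fun r hr => ?_⟩
    obtain ⟨t, _, rfl⟩ := hr
    exact risk_nonneg _
  have hM0 : 0 ≤ opNorm Sigl := by unfold opNorm; exact norm_nonneg _
  have hkey : ∀ l : ℝ, lam ≤ l → l ≤ lam + 2 * opNorm Sigl →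
      sInf {r : ℝ | ∃ t : ℝ, 1 / (2 * opNorm Sigl) ≤ t ∧
        r = risk (fun x => Real.exp (-(t * x)))}
      ≤ 1.2985 ^ 2 * risk (fun x => (l - lam) / ((l - lam) + x)) := by
    intro l hl1 hl2
    rcases eq_or_lt_of_le hl1 with rfl | hlt
    · have htend0 : ∀ i : Fin p, Filter.Tendsto (fun t : ℝ => Real.exp (-(t * μ i)))
          Filter.atTop (𝓝 0) := by
        intro i
        apply Real.tendsto_exp_atBot.comp
        exact tendsto_neg_atTop_atBot.comp (Filter.tendsto_id.atTop_mul_const (hμ0 i))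
      have hval : risk (fun x => (lam - lam) / ((lam - lam) + x))
          = ∑ i, (μ i * (((0:ℝ) * ((μ i - lam) * (μ i)⁻¹)
              + ((μ i - lam) * (μ i - lam + lam')⁻¹ - (μ i - lam) * (μ i)⁻¹))
                * ((star U *ᵥ beta0) i)) ^ 2
            + sigma ^ 2 / n * ((1 - (0:ℝ)) ^ 2 * (μ i)⁻¹ * (μ i - lam))) := by
        rw [riskf]
        refine Finset.sum_congr rfl fun i _ => ?_
        norm_num
      have htend : Filter.Tendsto (fun t : ℝ => risk (fun x => Real.exp (-(t * x))))
          Filter.atTop (𝓝 (risk (fun x => (lam - lam) / ((lam - lam) + x)))) := by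
        rw [hval]
        simp only [riskf]
        apply tendsto_finset_sum
        intro i _
        have hF : Continuous (fun y : ℝ => μ i * ((y * ((μ i - lam) * (μ i)⁻¹)
            + ((μ i - lam) * (μ i - lam + lam')⁻¹ - (μ i - lam) * (μ i)⁻¹))
              * ((star U *ᵥ beta0) i)) ^ 2
            + sigma ^ 2 / n * ((1 - y) ^ 2 * (μ i)⁻¹ * (μ i - lam))) := by
          fun_prop
        exact (hF.tendsto 0).comp (htend0 i)
      have hle : sInf {r : ℝ | ∃ t : ℝ, 1 / (2 * opNorm Sigl) ≤ t ∧
          r = risk (fun x => Real.exp (-(t * x)))}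
          ≤ risk (fun x => (lam - lam) / ((lam - lam) + x)) := by
        refine ge_of_tendsto htend ?_
        filter_upwards [Filter.eventually_ge_atTop (1 / (2 * opNorm Sigl))] with t ht
        exact csInf_le hLbdd ⟨t, ht, rfl⟩
      nlinarith [hle, risk_nonneg (fun x => (lam - lam) / ((lam - lam) + x))]
    · have hk : 0 < l - lam := by linarith
      have hMpos : 0 < opNorm Sigl := by nlinarith
      have ht0 : 1 / (2 * opNorm Sigl) ≤ (l - lam)⁻¹ := by
        rw [inv_eq_one_div]
        apply one_div_le_one_div_of_le hk
        linarith
      refine le_trans (csInf_le hLbdd ⟨(l - lam)⁻¹, ht0, rfl⟩) ?_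
      rw [riskf, riskf, Finset.mul_sum]
      refine Finset.sum_le_sum fun i _ => ?_
      obtain ⟨he1, he2⟩ := exp_ridge_bounds (l - lam) (μ i) hk (hμ0 i)
      have hkx : 0 < (l - lam) + μ i := by nlinarith [hμ0 i]
      have hRr1 : (l - lam) / ((l - lam) + μ i) ≤ 1 := by
        rw [div_le_one hkx]
        linarith [hμ0 i]
      have hf1 : 0 ≤ (μ i - lam) * (μ i)⁻¹ :=
        mul_nonneg (by linarith [hμlam i]) (inv_nonneg.2 (hμ0 i).le)
      have hd : 0 ≤ (μ i - lam) * (μ i - lam + lam')⁻¹ - (μ i - lam) * (μ i)⁻¹ := by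
        have hp1 : 0 < μ i - lam + lam' := by linarith [hμlam i]
        have hp2 : μ i - lam + lam' ≤ μ i := by linarith
        have hp3 : (μ i)⁻¹ ≤ (μ i - lam + lam')⁻¹ := inv_anti₀ hp1 hp2
        have hp4 : 0 ≤ μ i - lam := by linarith [hμlam i]
        nlinarith
      exact term_compare_abs 1.2985 (μ i) lam (sigma ^ 2 / n)
        ((μ i - lam) * (μ i)⁻¹)
        ((μ i - lam) * (μ i - lam + lam')⁻¹ - (μ i - lam) * (μ i)⁻¹)
        ((star U *ᵥ beta0) i)
        (Real.exp (-((l - lam)⁻¹ * μ i)))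
        ((l - lam) / ((l - lam) + μ i))
        (by norm_num) (hμ0 i) (hμlam i) (by positivity)
        hf1 hd (Real.exp_pos _).le (le_trans he1 hRr1)
        (by positivity) he1 he2
  have hRne : Set.Nonempty {r : ℝ | ∃ l : ℝ, lam ≤ l ∧ l ≤ lam + 2 * opNorm Sigl ∧
      r = risk (fun x => (l - lam) / ((l - lam) + x))} :=
    ⟨risk (fun x => (lam - lam) / ((lam - lam) + x)), lam, le_refl lam, by linarith, rfl⟩
  have h2 : sInf {r : ℝ | ∃ t : ℝ, 1 / (2 * opNorm Sigl) ≤ t ∧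
      r = risk (fun x => Real.exp (-(t * x)))} / 1.2985 ^ 2
      ≤ sInf {r : ℝ | ∃ l : ℝ, lam ≤ l ∧ l ≤ lam + 2 * opNorm Sigl ∧
        r = risk (fun x => (l - lam) / ((l - lam) + x))} := by
    apply le_csInf hRne
    rintro r ⟨l, hl1, hl2, rfl⟩
    rw [div_le_iff₀ (by norm_num : (0:ℝ) < 1.2985 ^ 2)]
    linarith [hkey l hl1 hl2]
  have h3 := mul_le_mul_of_nonneg_right h2 (by norm_num : (0:ℝ) ≤ 1.2985 ^ 2)
  calc sInf {r : ℝ | ∃ t : ℝ, 1 / (2 * opNorm Sigl) ≤ t ∧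
      r = risk (fun x => Real.exp (-(t * x)))}
      = sInf {r : ℝ | ∃ t : ℝ, 1 / (2 * opNorm Sigl) ≤ t ∧
        r = risk (fun x => Real.exp (-(t * x)))} / 1.2985 ^ 2 * 1.2985 ^ 2 := by
        field_simp
    _ ≤ sInf {r : ℝ | ∃ l : ℝ, lam ≤ l ∧ l ≤ lam + 2 * opNorm Sigl ∧
        r = risk (fun x => (l - lam) / ((l - lam) + x))} * 1.2985 ^ 2 := h3
    _ = 1.2985 ^ 2 * sInf {r : ℝ | ∃ l : ℝ, lam ≤ l ∧ l ≤ lam + 2 * opNorm Sigl ∧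
        r = risk (fun x => (l - lam) / ((l - lam) + x))} := mul_comm _ _
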